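/- arXiv:2504.04290 — 3 statements merged into one kernel-verified Lean document; each statement's English description precedes it below -/
import Mathlib

section
/- If θ > N/2 and W is symmetric with entries in [0,1] and zero diagonal, then the potential function Φ_W is maximized over {0,1}^N at a = 𝟘, i.e., Φ_W(𝟘) ≥ Φ_W(a) for all a ∈ {0,1}^N. -/
open Matrix

theorem potential_maximized_at_zero (N : ℕ) (hN : 1 ≤ N) (θ : ℝ)
    (hθ : θ > N / 2)
    (W : Matrix (Fin N) (Fin N) ℝ) (hsym : W.IsSymm)
    (hrange : ∀ i j, W i j ∈ Set.Icc (0:ℝ) 1) (hdiag : ∀ i, W i i = 0)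
    (Φ : (Fin N → ℝ) → ℝ)
    (hΦ : ∀ a, Φ a = (1/2) * (a ⬝ᵥ W.mulVec a)
        - (θ / N) * ((fun _ => (1:ℝ)) ⬝ᵥ W.mulVec a)
        + (θ / (2 * N)) * ((fun _ => (1:ℝ)) ⬝ᵥ W.mulVec (fun _ => (1:ℝ)))) :
    ∀ a : Fin N → ℝ, (∀ j, a j = 0 ∨ a j = 1) →
      Φ a ≤ Φ (fun _ => (0:ℝ)) := by
  intro a ha
  have hN0 : (0:ℝ) < N := by exact_mod_cast Nat.lt_of_lt_of_le Nat.zero_lt_one hN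
  have ha0 : ∀ j, 0 ≤ a j := fun j => by rcases ha j with h | h <;> simp [h]
  have ha1 : ∀ j, a j ≤ 1 := fun j => by rcases ha j with h | h <;> simp [h]
  have hzero : W.mulVec (fun _ => (0:ℝ)) = fun _ => 0 := by
    funext i; simp [Matrix.mulVec, dotProduct]
  have hinner : ∀ i, 0 ≤ W.mulVec a i := by
    intro i
    simp only [Matrix.mulVec, dotProduct]
    apply Finset.sum_nonneg
    intro j _
    exact mul_nonneg (hrange i j).1 (ha0 j)
  -- Q ≤ L
  have hQL : a ⬝ᵥ W.mulVec a ≤ (fun _ => (1:ℝ)) ⬝ᵥ W.mulVec a := by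
    apply Finset.sum_le_sum
    intro i _
    calc a i * W.mulVec a i ≤ 1 * W.mulVec a i :=
          mul_le_mul_of_nonneg_right (ha1 i) (hinner i)
      _ = (fun _ => (1:ℝ)) i * W.mulVec a i := by simp
  have hL0 : 0 ≤ (fun _ => (1:ℝ)) ⬝ᵥ W.mulVec a := by
    apply Finset.sum_nonneg
    intro i _
    simpa using hinner i
  have hhalf : (1:ℝ)/2 ≤ θ / N := by
    rw [le_div_iff₀ hN0]
    linarith
  have hQ0 : 0 ≤ a ⬝ᵥ W.mulVec a := by
    apply Finset.sum_nonneg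
    intro i _
    exact mul_nonneg (ha0 i) (hinner i)
  rw [hΦ, hΦ]
  rw [hzero]
  simp only [dotProduct, Pi.zero_apply, mul_zero]
  have : (1/2) * (a ⬝ᵥ W.mulVec a) ≤ (θ / N) * ((fun _ => (1:ℝ)) ⬝ᵥ W.mulVec a) :=
    calc (1/2) * (a ⬝ᵥ W.mulVec a) ≤ (1/2) * ((fun _ => (1:ℝ)) ⬝ᵥ W.mulVec a) := by
          linarith
      _ ≤ (θ / N) * ((fun _ => (1:ℝ)) ⬝ᵥ W.mulVec a) :=
          mul_le_mul_of_nonneg_right hhalf hL0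
  simp only [dotProduct] at this ⊢
  simp only [one_mul] at this
  simp
  linarith
end

section
/- If θ < N/2 and W is symmetric with nonnegative entries and zero diagonal, then the potential function Φ_W is maximized over {0,1}^N at a = 𝟙, i.e., Φ_W(𝟙) ≥ Φ_W(a) for all a ∈ {0,1}^N. -/
open Matrix

theorem potential_maximized_at_one (N : ℕ) (hN : 1 ≤ N) (θ : ℝ)
    (hθ : θ < N / 2)
    (W : Matrix (Fin N) (Fin N) ℝ) (hsym : W.IsSymm)
    (hrange : ∀ i j, W i j ∈ Set.Icc (0:ℝ) 1) (hdiag : ∀ i, W i i = 0)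
    (Φ : (Fin N → ℝ) → ℝ)
    (hΦ : ∀ a, Φ a = (1/2) * (a ⬝ᵥ W.mulVec a)
        - (θ / N) * ((fun _ => (1:ℝ)) ⬝ᵥ W.mulVec a)
        + (θ / (2 * N)) * ((fun _ => (1:ℝ)) ⬝ᵥ W.mulVec (fun _ => (1:ℝ)))) :
    ∀ a : Fin N → ℝ, (∀ j, a j = 0 ∨ a j = 1) →
      Φ a ≤ Φ (fun _ => (1:ℝ)) := by
  intro a ha
  rw [hΦ, hΦ]
  have ha01 : ∀ j, 0 ≤ a j ∧ a j ≤ 1 := by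
    intro j; rcases ha j with h | h <;> rw [h] <;> constructor <;> norm_num
  have hA : a ⬝ᵥ W.mulVec a = ∑ i, ∑ j, a i * (W i j * a j) := by
    simp [dotProduct, Matrix.mulVec, Finset.mul_sum]
  have hB : (fun _ => (1:ℝ)) ⬝ᵥ W.mulVec a = ∑ i, ∑ j, W i j * a j := by
    simp [dotProduct, Matrix.mulVec]
  have hS : (fun _ => (1:ℝ)) ⬝ᵥ W.mulVec (fun _ => (1:ℝ)) = ∑ i, ∑ j, W i j := by
    simp [dotProduct, Matrix.mulVec]
  set A := ∑ i, ∑ j, a i * (W i j * a j) with hAdef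
  set B := ∑ i, ∑ j, W i j * a j with hBdef
  set S := ∑ i : Fin N, ∑ j, W i j with hSdef
  have hAB : A ≤ B := by
    apply Finset.sum_le_sum; intro i _
    apply Finset.sum_le_sum; intro j _
    have hw := (hrange i j).1
    have := (ha01 i); have := (ha01 j)
    nlinarith [mul_nonneg hw (ha01 j).1]
  have hBS : B ≤ S := by
    apply Finset.sum_le_sum; intro i _
    apply Finset.sum_le_sum; intro j _
    have hw := hrange i j
    nlinarith [(ha01 j).1, (ha01 j).2, hw.1]
  have hNpos : (0:ℝ) < N := by exact_mod_cast hN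
  have hθN : θ / N < 1 / 2 := by
    rw [div_lt_div_iff₀ hNpos two_pos]; linarith

  have hx : 0 ≤ S - B := by linarith
  have hy : S - B ≤ S - A := by linarith
  nlinarith [mul_le_mul_of_nonneg_right (le_of_lt hθN) hx]
end

section
/- If θ > N/2 and N ≥ 2, then for all sufficiently large β, F(1) = Σ_{d=0}^{N} C(N,d)·exp(β·A_d)·β·A_d + (ρ/2)·N(N-1) > 0; i.e., the sum Σ_{d=1}^{N} C(N,d)·exp(β·A_d)·β·A_d tends to 0 as β → ∞ since all A_d < 0 for d ≥ 1. -/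
open Filter

lemma aux_mul_exp_atBot : Tendsto (fun t : ℝ => Real.exp t * t) atBot (nhds 0) := by
  have h := (Real.tendsto_pow_mul_exp_neg_atTop_nhds_zero 1).comp tendsto_neg_atBot_atTop
  have h2 : Tendsto (fun t : ℝ => -((-t) ^ 1 * Real.exp (-(-t)))) atBot (nhds (-0)) :=
    h.neg
  simp only [neg_zero] at h2
  convert h2 using 2 with t
  rw [neg_neg, pow_one]
  ring

lemma aux_term_tendsto (a : ℝ) (ha : a < 0) (c : ℝ) :
    Tendsto (fun β : ℝ => c * Real.exp (β * a) * (β * a)) atTop (nhds 0) := by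
  have hβa : Tendsto (fun β : ℝ => β * a) atTop atBot :=
    tendsto_id.atTop_mul_const_of_neg ha
  have h := (aux_mul_exp_atBot.comp hβa).const_mul c
  simp only [mul_zero] at h
  convert h using 2 with β
  simp [Function.comp]
  ring

theorem F_at_one_positive_for_large_beta (N : ℕ) (hN : 2 ≤ N) (θ : ℝ)
    (hθ : θ > N / 2) (ρ : ℝ) (hρ : 0 < ρ)
    (A : ℕ → ℝ) (hA : ∀ d, A d = ((d:ℝ)^2 - d) / 2 - (θ / N) * (N - 1) * d) :
    (∃ β₀ : ℝ, ∀ β ≥ β₀,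
      (∑ d ∈ Finset.range (N + 1),
          (N.choose d : ℝ) * Real.exp (β * A d) * (β * A d))
        + (ρ / 2) * N * (N - 1) > 0)
    ∧ Tendsto (fun β : ℝ => ∑ d ∈ Finset.Icc 1 N,
        (N.choose d : ℝ) * Real.exp (β * A d) * (β * A d)) atTop (nhds 0) := by
  have hN1 : (1:ℝ) ≤ (N:ℝ) - 1 := by
    have : (2:ℝ) ≤ (N:ℝ) := by exact_mod_cast hN
    linarith
  have hNpos : (0:ℝ) < N := by linarith
  have hAneg : ∀ d ∈ Finset.Icc 1 N, A d < 0 := by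
    intro d hd
    rw [Finset.mem_Icc] at hd
    rw [hA d]
    have hd1 : (1:ℝ) ≤ (d:ℝ) := by exact_mod_cast hd.1
    have hdN : (d:ℝ) ≤ (N:ℝ) := by exact_mod_cast hd.2
    have hθN : 1/2 < θ / N := by
      rw [lt_div_iff₀ hNpos]; linarith [hθ]
    have key : ((d:ℝ)^2 - d) / 2 ≤ (1/2) * ((N:ℝ) - 1) * d := by nlinarith
    have hd0 : (0:ℝ) < ((N:ℝ) - 1) * d := by nlinarith
    have : (1/2) * ((N:ℝ) - 1) * d < (θ/N) * ((N:ℝ) - 1) * d := by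
      nlinarith [mul_pos (sub_pos.mpr hθN) hd0]
    linarith
  have htend : Tendsto (fun β : ℝ => ∑ d ∈ Finset.Icc 1 N,
      (N.choose d : ℝ) * Real.exp (β * A d) * (β * A d)) atTop (nhds 0) := by
    have := tendsto_finset_sum (Finset.Icc 1 N)
      (fun d hd => aux_term_tendsto (A d) (hAneg d hd) (N.choose d : ℝ))
    simpa using this
  refine ⟨?_, htend⟩
  have hsum : ∀ β : ℝ, (∑ d ∈ Finset.range (N + 1),
      (N.choose d : ℝ) * Real.exp (β * A d) * (β * A d))
      = ∑ d ∈ Finset.Icc 1 N, (N.choose d : ℝ) * Real.exp (β * A d) * (β * A d) := by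
    intro β
    have hset : Finset.range (N + 1) = insert 0 (Finset.Icc 1 N) := by
      ext x
      simp only [Finset.mem_range, Finset.mem_insert, Finset.mem_Icc]
      omega
    rw [hset, Finset.sum_insert (by simp)]
    rw [hA 0]
    simp
  have hc : (0:ℝ) < (ρ / 2) * N * (N - 1) :=
    mul_pos (mul_pos (by linarith) hNpos) (by linarith)
  have htend2 : Tendsto (fun β : ℝ => (∑ d ∈ Finset.range (N + 1),
      (N.choose d : ℝ) * Real.exp (β * A d) * (β * A d)) + (ρ / 2) * N * (N - 1))
      atTop (nhds ((ρ / 2) * N * (N - 1))) := by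
    have := htend.add_const ((ρ / 2) * (N:ℝ) * ((N:ℝ) - 1))
    rw [zero_add] at this
    simpa only [hsum] using this
  have hev := htend2.eventually (eventually_gt_nhds hc)
  rw [eventually_atTop] at hev
  obtain ⟨β₀, hβ₀⟩ := hev
  exact ⟨β₀, fun β hβ => hβ₀ β hβ⟩
end
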